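/- For jointly distributed finite random variables X, Y_1, Y_2, W_1, W_2 satisfying the Markov chain (W_1, W_2) ↔ X ↔ Y_1 ↔ Y_2, the following identity holds: I(X; W_2 | Y_2) + I(X; W_1 | W_2, Y_1) = I(X; W_1, W_2 | Y_1, Y_2) + I(Y_1; W_2 | Y_2) + I(X; W_1, W_2 | Y_1) − I(X; W_1, W_2 | Y_1, Y_2). -/
import Mathlib


open scoped BigOperators

namespace SIScalable

variable {Ω : Type*} [Fintype Ω]

/-- Probability that a finite random variable `X` takes value `a`, under pmf `μ`. -/
noncomputable def pr (μ : Ω → ℝ) {A : Type*} [DecidableEq A] (X : Ω → A) (a : A) : ℝ :=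
  ∑ ω, if X ω = a then μ ω else 0

/-- `μ` is a probability mass function. -/
def IsPMF (μ : Ω → ℝ) : Prop := (∀ ω, 0 ≤ μ ω) ∧ ∑ ω, μ ω = 1

/-- Shannon entropy (in bits) of a finite random variable. -/
noncomputable def ent (μ : Ω → ℝ) {A : Type*} [Fintype A] [DecidableEq A] (X : Ω → A) : ℝ :=
  -∑ a : A, pr μ X a * Real.logb 2 (pr μ X a)

/-- Conditional Shannon entropy `H(X|Y)`. -/
noncomputable def condEnt (μ : Ω → ℝ) {A B : Type*} [Fintype A] [DecidableEq A]
    [Fintype B] [DecidableEq B] (X : Ω → A) (Y : Ω → B) : ℝ :=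
  ent μ (fun ω => (X ω, Y ω)) - ent μ Y

/-- Conditional mutual information `I(X;Y|Z)`. -/
noncomputable def cmi (μ : Ω → ℝ) {A B C : Type*} [Fintype A] [DecidableEq A]
    [Fintype B] [DecidableEq B] [Fintype C] [DecidableEq C]
    (X : Ω → A) (Y : Ω → B) (Z : Ω → C) : ℝ :=
  ent μ (fun ω => (X ω, Z ω)) + ent μ (fun ω => (Y ω, Z ω))
    - ent μ (fun ω => (X ω, Y ω, Z ω)) - ent μ Z

/-! ### Auxiliary lemmas -/

lemma pr_nonneg (μ : Ω → ℝ) (hμ : ∀ ω, 0 ≤ μ ω) {A : Type*} [DecidableEq A] (X : Ω → A) (a : A) :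
    0 ≤ pr μ X a := by
  apply Finset.sum_nonneg
  intro ω _
  split <;> simp [hμ ω]

lemma pr_comp_inj (μ : Ω → ℝ) {A B : Type*} [DecidableEq A] [DecidableEq B]
    (g : A → B) (hg : Function.Injective g) (X : Ω → A) (a : A) :
    pr μ (fun ω => g (X ω)) (g a) = pr μ X a := by
  unfold pr
  apply Finset.sum_congr rfl
  intro ω _
  simp [hg.eq_iff]

lemma pr_le_comp (μ : Ω → ℝ) (hμ : ∀ ω, 0 ≤ μ ω) {A B : Type*} [DecidableEq A] [DecidableEq B]
    (g : A → B) (X : Ω → A) (a : A) :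
    pr μ X a ≤ pr μ (fun ω => g (X ω)) (g a) := by
  apply Finset.sum_le_sum
  intro ω _
  by_cases h : X ω = a
  · simp [h]
  · rw [if_neg h]
    split
    · exact hμ ω
    · exact le_rfl

lemma pr_eq_zero_of (μ : Ω → ℝ) (hμ : ∀ ω, 0 ≤ μ ω) {A B : Type*} [DecidableEq A] [DecidableEq B]
    (g : A → B) (X : Ω → A) (a : A) (h : pr μ (fun ω => g (X ω)) (g a) = 0) :
    pr μ X a = 0 :=
  le_antisymm (h ▸ pr_le_comp μ hμ g X a) (pr_nonneg μ hμ X a)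

lemma sum_pr_mul (μ : Ω → ℝ) {A : Type*} [Fintype A] [DecidableEq A] (X : Ω → A) (F : A → ℝ) :
    ∑ a, pr μ X a * F a = ∑ ω, μ ω * F (X ω) := by
  unfold pr
  simp_rw [Finset.sum_mul]
  rw [Finset.sum_comm]
  apply Finset.sum_congr rfl
  intro ω _
  rw [Finset.sum_eq_single (X ω)]
  · simp
  · intro b _ hb
    rw [if_neg (fun h => hb h.symm), zero_mul]
  · simp

lemma sum_pr_break (μ : Ω → ℝ) {A B : Type*} [Fintype A] [DecidableEq A] [Fintype B]
    [DecidableEq B] (g : A → B) (X : Ω → A) (F : B → ℝ) :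
    ∑ a, pr μ X a * F (g a) = ∑ b, pr μ (fun ω => g (X ω)) b * F b := by
  rw [sum_pr_mul μ X (fun a => F (g a)), sum_pr_mul μ (fun ω => g (X ω)) F]

lemma sum_pr_fst (μ : Ω → ℝ) {A B : Type*} [Fintype A] [DecidableEq A] [DecidableEq B]
    (f : Ω → A) (h : Ω → B) (b : B) :
    ∑ a, pr μ (fun ω => (f ω, h ω)) (a, b) = pr μ h b := by
  unfold pr
  rw [Finset.sum_comm]
  apply Finset.sum_congr rfl
  intro ω _
  rw [Finset.sum_eq_single (f ω)]
  · by_cases hb : h ω = b <;> simp [hb]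
  · intro a _ ha
    rw [if_neg (fun hc => ha (congrArg Prod.fst hc).symm)]
  · simp

lemma ent_comp_inj (μ : Ω → ℝ) {A B : Type*} [Fintype A] [DecidableEq A] [Fintype B]
    [DecidableEq B] (g : A → B) (hg : Function.Injective g) (X : Ω → A) :
    ent μ (fun ω => g (X ω)) = ent μ X := by
  unfold ent
  congr 1
  rw [← Finset.sum_subset (Finset.subset_univ (Finset.image g Finset.univ))]
  · rw [Finset.sum_image (fun a _ b _ h => hg h)]
    apply Finset.sum_congr rfl
    intro a _
    rw [pr_comp_inj μ g hg X a]
  · intro b _ hb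
    have hz : pr μ (fun ω => g (X ω)) b = 0 := by
      apply Finset.sum_eq_zero
      intro ω _
      rw [if_neg]
      intro h
      exact hb (Finset.mem_image.mpr ⟨X ω, Finset.mem_univ _, h⟩)
    rw [hz, zero_mul]

lemma ci_ent (μ : Ω → ℝ) (hμ : ∀ ω, 0 ≤ μ ω)
    {α β γ : Type*} [Fintype α] [DecidableEq α] [Fintype β] [DecidableEq β]
    [Fintype γ] [DecidableEq γ]
    (A : Ω → α) (B : Ω → β) (C : Ω → γ)
    (h : ∀ a b c, pr μ (fun ω => (A ω, B ω, C ω)) (a, b, c) * pr μ C c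
       = pr μ (fun ω => (A ω, C ω)) (a, c) * pr μ (fun ω => (B ω, C ω)) (b, c)) :
    ent μ (fun ω => (A ω, B ω, C ω)) + ent μ C
      = ent μ (fun ω => (A ω, C ω)) + ent μ (fun ω => (B ω, C ω)) := by
  set T : Ω → α × β × γ := fun ω => (A ω, B ω, C ω) with hT
  have key : ∀ x : α × β × γ,
      pr μ T x * Real.logb 2 (pr μ T x)
        + pr μ T x * Real.logb 2 (pr μ C x.2.2)
      = pr μ T x * Real.logb 2 (pr μ (fun ω => (A ω, C ω)) (x.1, x.2.2))
        + pr μ T x * Real.logb 2 (pr μ (fun ω => (B ω, C ω)) (x.2.1, x.2.2)) := by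
    rintro ⟨a, b, c⟩
    by_cases hp : pr μ T (a, b, c) = 0
    · simp [hp]
    · have hT0 : 0 < pr μ T (a, b, c) :=
        lt_of_le_of_ne (pr_nonneg μ hμ T _) (Ne.symm hp)
      have hC0 : 0 < pr μ C c := by
        have := pr_le_comp μ hμ (fun x : α × β × γ => x.2.2) T (a, b, c)
        exact lt_of_lt_of_le hT0 this
      have hprod : 0 < pr μ (fun ω => (A ω, C ω)) (a, c) * pr μ (fun ω => (B ω, C ω)) (b, c) := by
        rw [← h a b c]; positivity
      have hAC0 : 0 < pr μ (fun ω => (A ω, C ω)) (a, c) := by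
        rcases lt_or_eq_of_le (pr_nonneg μ hμ (fun ω => (A ω, C ω)) (a, c)) with h' | h'
        · exact h'
        · rw [← h'] at hprod; simp at hprod
      have hBC0 : 0 < pr μ (fun ω => (B ω, C ω)) (b, c) := by
        rcases lt_or_eq_of_le (pr_nonneg μ hμ (fun ω => (B ω, C ω)) (b, c)) with h' | h'
        · exact h'
        · rw [← h'] at hprod; simp at hprod
      have hlog : Real.logb 2 (pr μ T (a, b, c)) + Real.logb 2 (pr μ C c)
          = Real.logb 2 (pr μ (fun ω => (A ω, C ω)) (a, c))
            + Real.logb 2 (pr μ (fun ω => (B ω, C ω)) (b, c)) := by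
        rw [← Real.logb_mul (ne_of_gt hT0) (ne_of_gt hC0),
            ← Real.logb_mul (ne_of_gt hAC0) (ne_of_gt hBC0), h a b c]
      have := congrArg (fun t => pr μ T (a, b, c) * t) hlog
      simp only [mul_add] at this
      exact this
  have hsum := Finset.sum_congr rfl (fun x (_ : x ∈ (Finset.univ : Finset (α × β × γ))) => key x)
  rw [Finset.sum_add_distrib, Finset.sum_add_distrib] at hsum
  rw [sum_pr_break μ (fun x : α × β × γ => x.2.2) T
        (fun c => Real.logb 2 (pr μ C c)),
      sum_pr_break μ (fun x : α × β × γ => (x.1, x.2.2)) T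
        (fun p => Real.logb 2 (pr μ (fun ω => (A ω, C ω)) p)),
      sum_pr_break μ (fun x : α × β × γ => (x.2.1, x.2.2)) T
        (fun p => Real.logb 2 (pr μ (fun ω => (B ω, C ω)) p))] at hsum
  have e1 : (fun ω => (T ω).2.2) = C := rfl
  have e2 : (fun ω => ((T ω).1, (T ω).2.2)) = (fun ω => (A ω, C ω)) := rfl
  have e3 : (fun ω => ((T ω).2.1, (T ω).2.2)) = (fun ω => (B ω, C ω)) := rfl
  rw [e1, e2, e3] at hsum
  unfold ent
  linarith [hsum]

set_option maxHeartbeats 2000000 in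
/-- Under (W₁,W₂) ↔ X ↔ Y₁ ↔ Y₂,
I(X;W₂|Y₂) + I(X;W₁|W₂,Y₁)
  = I(X;W₁,W₂|Y₁,Y₂) + I(Y₁;W₂|Y₂) + I(X;W₁,W₂|Y₁) − I(X;W₁,W₂|Y₁,Y₂). -/
theorem sum_rate_identity_expanded
    {Ω 𝒳 𝒴₁ 𝒴₂ 𝒲₁ 𝒲₂ : Type*} [Fintype Ω]
    [Fintype 𝒳] [DecidableEq 𝒳] [Fintype 𝒴₁] [DecidableEq 𝒴₁]
    [Fintype 𝒴₂] [DecidableEq 𝒴₂] [Fintype 𝒲₁] [DecidableEq 𝒲₁]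
    [Fintype 𝒲₂] [DecidableEq 𝒲₂]
    (μ : Ω → ℝ) (hμ : IsPMF μ)
    (X : Ω → 𝒳) (Y₁ : Ω → 𝒴₁) (Y₂ : Ω → 𝒴₂) (W₁ : Ω → 𝒲₁) (W₂ : Ω → 𝒲₂)
    (hMarkov : ∀ (w₁ : 𝒲₁) (w₂ : 𝒲₂) (x : 𝒳) (y₁ : 𝒴₁) (y₂ : 𝒴₂),
      pr μ (fun ω => (W₁ ω, W₂ ω, X ω, Y₁ ω, Y₂ ω)) (w₁, w₂, x, y₁, y₂)
          * pr μ X x * pr μ Y₁ y₁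
        = pr μ (fun ω => (W₁ ω, W₂ ω, X ω)) (w₁, w₂, x)
          * pr μ (fun ω => (X ω, Y₁ ω)) (x, y₁)
          * pr μ (fun ω => (Y₁ ω, Y₂ ω)) (y₁, y₂)) :
    cmi μ X W₂ Y₂ + cmi μ X W₁ (fun ω => (W₂ ω, Y₁ ω))
      = cmi μ X (fun ω => (W₁ ω, W₂ ω)) (fun ω => (Y₁ ω, Y₂ ω))
        + cmi μ Y₁ W₂ Y₂
        + cmi μ X (fun ω => (W₁ ω, W₂ ω)) Y₁
        - cmi μ X (fun ω => (W₁ ω, W₂ ω)) (fun ω => (Y₁ ω, Y₂ ω)) := by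
  obtain ⟨hpos, -⟩ := hμ
  -- Marginalization facts
  have M1 : ∀ w₂ x y₁ y₂, (∑ w₁, pr μ (fun ω => (W₁ ω, W₂ ω, X ω, Y₁ ω, Y₂ ω)) (w₁, w₂, x, y₁, y₂))
      = pr μ (fun ω => (W₂ ω, X ω, Y₁ ω, Y₂ ω)) (w₂, x, y₁, y₂) := fun w₂ x y₁ y₂ =>
    sum_pr_fst μ W₁ (fun ω => (W₂ ω, X ω, Y₁ ω, Y₂ ω)) (w₂, x, y₁, y₂)
  have M2 : ∀ w₂ x, (∑ w₁, pr μ (fun ω => (W₁ ω, W₂ ω, X ω)) (w₁, w₂, x))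
      = pr μ (fun ω => (W₂ ω, X ω)) (w₂, x) := fun w₂ x =>
    sum_pr_fst μ W₁ (fun ω => (W₂ ω, X ω)) (w₂, x)
  have M3 : ∀ x y₁ y₂, (∑ w₂, pr μ (fun ω => (W₂ ω, X ω, Y₁ ω, Y₂ ω)) (w₂, x, y₁, y₂))
      = pr μ (fun ω => (X ω, Y₁ ω, Y₂ ω)) (x, y₁, y₂) := fun x y₁ y₂ =>
    sum_pr_fst μ W₂ (fun ω => (X ω, Y₁ ω, Y₂ ω)) (x, y₁, y₂)
  have M4 : ∀ x, (∑ w₂, pr μ (fun ω => (W₂ ω, X ω)) (w₂, x)) = pr μ X x := fun x =>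
    sum_pr_fst μ W₂ X x
  have M5 : ∀ w₂ x y₁, (∑ y₂, pr μ (fun ω => (W₂ ω, X ω, Y₁ ω, Y₂ ω)) (w₂, x, y₁, y₂))
      = pr μ (fun ω => (W₂ ω, X ω, Y₁ ω)) (w₂, x, y₁) := by
    intro w₂ x y₁
    rw [← sum_pr_fst μ Y₂ (fun ω => (W₂ ω, X ω, Y₁ ω)) (w₂, x, y₁)]
    exact Finset.sum_congr rfl fun y₂ _ =>
      pr_comp_inj μ (fun q : 𝒴₂ × 𝒲₂ × 𝒳 × 𝒴₁ => (q.2.1, q.2.2.1, q.2.2.2, q.1))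
        (by rintro ⟨a,b,c,d⟩ ⟨a',b',c',d'⟩ h; simp_all [Prod.ext_iff])
        (fun ω => (Y₂ ω, W₂ ω, X ω, Y₁ ω)) (y₂, w₂, x, y₁)
  have M6 : ∀ x y₁, (∑ y₂, pr μ (fun ω => (X ω, Y₁ ω, Y₂ ω)) (x, y₁, y₂))
      = pr μ (fun ω => (X ω, Y₁ ω)) (x, y₁) := by
    intro x y₁
    rw [← sum_pr_fst μ Y₂ (fun ω => (X ω, Y₁ ω)) (x, y₁)]
    exact Finset.sum_congr rfl fun y₂ _ =>
      pr_comp_inj μ (fun q : 𝒴₂ × 𝒳 × 𝒴₁ => (q.2.1, q.2.2, q.1))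
        (by rintro ⟨a,b,c⟩ ⟨a',b',c'⟩ h; simp_all [Prod.ext_iff])
        (fun ω => (Y₂ ω, X ω, Y₁ ω)) (y₂, x, y₁)
  have M7 : ∀ w₂ x y₂, (∑ y₁, pr μ (fun ω => (W₂ ω, X ω, Y₁ ω, Y₂ ω)) (w₂, x, y₁, y₂))
      = pr μ (fun ω => (W₂ ω, X ω, Y₂ ω)) (w₂, x, y₂) := by
    intro w₂ x y₂
    rw [← sum_pr_fst μ Y₁ (fun ω => (W₂ ω, X ω, Y₂ ω)) (w₂, x, y₂)]
    exact Finset.sum_congr rfl fun y₁ _ =>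
      pr_comp_inj μ (fun q : 𝒴₁ × 𝒲₂ × 𝒳 × 𝒴₂ => (q.2.1, q.2.2.1, q.1, q.2.2.2))
        (by rintro ⟨a,b,c,d⟩ ⟨a',b',c',d'⟩ h; simp_all [Prod.ext_iff])
        (fun ω => (Y₁ ω, W₂ ω, X ω, Y₂ ω)) (y₁, w₂, x, y₂)
  have M8 : ∀ x y₂, (∑ y₁, pr μ (fun ω => (X ω, Y₁ ω, Y₂ ω)) (x, y₁, y₂))
      = pr μ (fun ω => (X ω, Y₂ ω)) (x, y₂) := by
    intro x y₂
    rw [← sum_pr_fst μ Y₁ (fun ω => (X ω, Y₂ ω)) (x, y₂)]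
    exact Finset.sum_congr rfl fun y₁ _ =>
      pr_comp_inj μ (fun q : 𝒴₁ × 𝒳 × 𝒴₂ => (q.2.1, q.1, q.2.2))
        (by rintro ⟨a,b,c⟩ ⟨a',b',c'⟩ h; simp_all [Prod.ext_iff])
        (fun ω => (Y₁ ω, X ω, Y₂ ω)) (y₁, x, y₂)
  have M9 : ∀ w₂ y₁ y₂, (∑ x, pr μ (fun ω => (W₂ ω, X ω, Y₁ ω, Y₂ ω)) (w₂, x, y₁, y₂))
      = pr μ (fun ω => (W₂ ω, Y₁ ω, Y₂ ω)) (w₂, y₁, y₂) := by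
    intro w₂ y₁ y₂
    rw [← sum_pr_fst μ X (fun ω => (W₂ ω, Y₁ ω, Y₂ ω)) (w₂, y₁, y₂)]
    exact Finset.sum_congr rfl fun x _ =>
      pr_comp_inj μ (fun q : 𝒳 × 𝒲₂ × 𝒴₁ × 𝒴₂ => (q.2.1, q.1, q.2.2.1, q.2.2.2))
        (by rintro ⟨a,b,c,d⟩ ⟨a',b',c',d'⟩ h; simp_all [Prod.ext_iff])
        (fun ω => (X ω, W₂ ω, Y₁ ω, Y₂ ω)) (x, w₂, y₁, y₂)
  have M10 : ∀ w₂ y₁, (∑ x, pr μ (fun ω => (W₂ ω, X ω, Y₁ ω)) (w₂, x, y₁))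
      = pr μ (fun ω => (W₂ ω, Y₁ ω)) (w₂, y₁) := by
    intro w₂ y₁
    rw [← sum_pr_fst μ X (fun ω => (W₂ ω, Y₁ ω)) (w₂, y₁)]
    exact Finset.sum_congr rfl fun x _ =>
      pr_comp_inj μ (fun q : 𝒳 × 𝒲₂ × 𝒴₁ => (q.2.1, q.1, q.2.2))
        (by rintro ⟨a,b,c⟩ ⟨a',b',c'⟩ h; simp_all [Prod.ext_iff])
        (fun ω => (X ω, W₂ ω, Y₁ ω)) (x, w₂, y₁)
  -- Vanishing facts
  have ZX4 : ∀ w₂ x y₁ y₂, pr μ X x = 0 →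
      pr μ (fun ω => (W₂ ω, X ω, Y₁ ω, Y₂ ω)) (w₂, x, y₁, y₂) = 0 := fun w₂ x y₁ y₂ hx =>
    pr_eq_zero_of μ hpos (fun q : 𝒲₂ × 𝒳 × 𝒴₁ × 𝒴₂ => q.2.1)
      (fun ω => (W₂ ω, X ω, Y₁ ω, Y₂ ω)) (w₂, x, y₁, y₂) hx
  have ZX3 : ∀ x y₁ y₂, pr μ X x = 0 →
      pr μ (fun ω => (X ω, Y₁ ω, Y₂ ω)) (x, y₁, y₂) = 0 := fun x y₁ y₂ hx =>
    pr_eq_zero_of μ hpos (fun q : 𝒳 × 𝒴₁ × 𝒴₂ => q.1)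
      (fun ω => (X ω, Y₁ ω, Y₂ ω)) (x, y₁, y₂) hx
  have ZXwxy1 : ∀ w₂ x y₁, pr μ X x = 0 →
      pr μ (fun ω => (W₂ ω, X ω, Y₁ ω)) (w₂, x, y₁) = 0 := fun w₂ x y₁ hx =>
    pr_eq_zero_of μ hpos (fun q : 𝒲₂ × 𝒳 × 𝒴₁ => q.2.1)
      (fun ω => (W₂ ω, X ω, Y₁ ω)) (w₂, x, y₁) hx
  have ZY4 : ∀ w₂ x y₁ y₂, pr μ Y₁ y₁ = 0 →
      pr μ (fun ω => (W₂ ω, X ω, Y₁ ω, Y₂ ω)) (w₂, x, y₁, y₂) = 0 := fun w₂ x y₁ y₂ hy =>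
    pr_eq_zero_of μ hpos (fun q : 𝒲₂ × 𝒳 × 𝒴₁ × 𝒴₂ => q.2.2.1)
      (fun ω => (W₂ ω, X ω, Y₁ ω, Y₂ ω)) (w₂, x, y₁, y₂) hy
  have ZY3 : ∀ x y₁ y₂, pr μ Y₁ y₁ = 0 →
      pr μ (fun ω => (X ω, Y₁ ω, Y₂ ω)) (x, y₁, y₂) = 0 := fun x y₁ y₂ hy =>
    pr_eq_zero_of μ hpos (fun q : 𝒳 × 𝒴₁ × 𝒴₂ => q.2.1)
      (fun ω => (X ω, Y₁ ω, Y₂ ω)) (x, y₁, y₂) hy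
  -- (*) marginalized Markov property
  have star : ∀ w₂ x y₁ y₂,
      pr μ (fun ω => (W₂ ω, X ω, Y₁ ω, Y₂ ω)) (w₂, x, y₁, y₂) * pr μ X x * pr μ Y₁ y₁
        = pr μ (fun ω => (W₂ ω, X ω)) (w₂, x) * pr μ (fun ω => (X ω, Y₁ ω)) (x, y₁)
          * pr μ (fun ω => (Y₁ ω, Y₂ ω)) (y₁, y₂) := by
    intro w₂ x y₁ y₂
    have h1 := Finset.sum_congr rfl
      (fun w₁ (_ : w₁ ∈ (Finset.univ : Finset 𝒲₁)) => hMarkov w₁ w₂ x y₁ y₂)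
    simp only [← Finset.sum_mul] at h1
    rw [M1 w₂ x y₁ y₂, M2 w₂ x] at h1
    exact h1
  -- (**)
  have dstar : ∀ x y₁ y₂,
      pr μ (fun ω => (X ω, Y₁ ω, Y₂ ω)) (x, y₁, y₂) * pr μ X x * pr μ Y₁ y₁
        = pr μ X x * pr μ (fun ω => (X ω, Y₁ ω)) (x, y₁)
          * pr μ (fun ω => (Y₁ ω, Y₂ ω)) (y₁, y₂) := by
    intro x y₁ y₂
    have h1 := Finset.sum_congr rfl
      (fun w₂ (_ : w₂ ∈ (Finset.univ : Finset 𝒲₂)) => star w₂ x y₁ y₂)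
    simp only [← Finset.sum_mul] at h1
    rw [M3 x y₁ y₂, M4 x] at h1
    exact h1
  -- (♦)  W₂ ⟂ (Y₁,Y₂) | X
  have diamond : ∀ w₂ x y₁ y₂,
      pr μ (fun ω => (W₂ ω, X ω, Y₁ ω, Y₂ ω)) (w₂, x, y₁, y₂) * pr μ X x
        = pr μ (fun ω => (W₂ ω, X ω)) (w₂, x)
          * pr μ (fun ω => (X ω, Y₁ ω, Y₂ ω)) (x, y₁, y₂) := by
    intro w₂ x y₁ y₂
    by_cases hx : pr μ X x = 0
    · rw [hx, ZX3 x y₁ y₂ hx]; ring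
    by_cases hy : pr μ Y₁ y₁ = 0
    · rw [ZY4 w₂ x y₁ y₂ hy, ZY3 x y₁ y₂ hy]; ring
    apply mul_right_cancel₀ (mul_ne_zero hx hy)
    linear_combination pr μ X x * star w₂ x y₁ y₂
      - pr μ (fun ω => (W₂ ω, X ω)) (w₂, x) * dstar x y₁ y₂
  -- (†)
  have dagger : ∀ w₂ x y₁,
      pr μ (fun ω => (W₂ ω, X ω, Y₁ ω)) (w₂, x, y₁) * pr μ X x
        = pr μ (fun ω => (W₂ ω, X ω)) (w₂, x) * pr μ (fun ω => (X ω, Y₁ ω)) (x, y₁) := by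
    intro w₂ x y₁
    have h1 := Finset.sum_congr rfl
      (fun y₂ (_ : y₂ ∈ (Finset.univ : Finset 𝒴₂)) => diamond w₂ x y₁ y₂)
    simp only [← Finset.sum_mul, ← Finset.mul_sum] at h1
    rw [M5 w₂ x y₁, M6 x y₁] at h1
    exact h1
  -- (‡)
  have ddagger : ∀ w₂ x y₂,
      pr μ (fun ω => (W₂ ω, X ω, Y₂ ω)) (w₂, x, y₂) * pr μ X x
        = pr μ (fun ω => (W₂ ω, X ω)) (w₂, x) * pr μ (fun ω => (X ω, Y₂ ω)) (x, y₂) := by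
    intro w₂ x y₂
    have h1 := Finset.sum_congr rfl
      (fun y₁ (_ : y₁ ∈ (Finset.univ : Finset 𝒴₁)) => diamond w₂ x y₁ y₂)
    simp only [← Finset.sum_mul, ← Finset.mul_sum] at h1
    rw [M7 w₂ x y₂, M8 x y₂] at h1
    exact h1
  -- (a') Y₁ ⟂ W₂ | (X,Y₂)
  have aprime : ∀ w₂ x y₁ y₂,
      pr μ (fun ω => (W₂ ω, X ω, Y₁ ω, Y₂ ω)) (w₂, x, y₁, y₂)
          * pr μ (fun ω => (X ω, Y₂ ω)) (x, y₂)
        = pr μ (fun ω => (X ω, Y₁ ω, Y₂ ω)) (x, y₁, y₂)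
          * pr μ (fun ω => (W₂ ω, X ω, Y₂ ω)) (w₂, x, y₂) := by
    intro w₂ x y₁ y₂
    by_cases hx : pr μ X x = 0
    · rw [ZX4 w₂ x y₁ y₂ hx, ZX3 x y₁ y₂ hx]; ring
    apply mul_right_cancel₀ hx
    linear_combination pr μ (fun ω => (X ω, Y₂ ω)) (x, y₂) * diamond w₂ x y₁ y₂
      - pr μ (fun ω => (X ω, Y₁ ω, Y₂ ω)) (x, y₁, y₂) * ddagger w₂ x y₂
  -- (b') Y₂ ⟂ W₂ | (X,Y₁)
  have bprime : ∀ w₂ x y₁ y₂,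
      pr μ (fun ω => (W₂ ω, X ω, Y₁ ω, Y₂ ω)) (w₂, x, y₁, y₂)
          * pr μ (fun ω => (X ω, Y₁ ω)) (x, y₁)
        = pr μ (fun ω => (X ω, Y₁ ω, Y₂ ω)) (x, y₁, y₂)
          * pr μ (fun ω => (W₂ ω, X ω, Y₁ ω)) (w₂, x, y₁) := by
    intro w₂ x y₁ y₂
    by_cases hx : pr μ X x = 0
    · rw [ZX4 w₂ x y₁ y₂ hx, ZX3 x y₁ y₂ hx]; ring
    apply mul_right_cancel₀ hx
    linear_combination pr μ (fun ω => (X ω, Y₁ ω)) (x, y₁) * diamond w₂ x y₁ y₂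
      - pr μ (fun ω => (X ω, Y₁ ω, Y₂ ω)) (x, y₁, y₂) * dagger w₂ x y₁
  -- (★)
  have starstar : ∀ w₂ x y₁ y₂,
      pr μ (fun ω => (W₂ ω, X ω, Y₁ ω, Y₂ ω)) (w₂, x, y₁, y₂) * pr μ Y₁ y₁
        = pr μ (fun ω => (W₂ ω, X ω, Y₁ ω)) (w₂, x, y₁)
          * pr μ (fun ω => (Y₁ ω, Y₂ ω)) (y₁, y₂) := by
    intro w₂ x y₁ y₂
    by_cases hx : pr μ X x = 0
    · rw [ZX4 w₂ x y₁ y₂ hx, ZXwxy1 w₂ x y₁ hx]; ring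
    apply mul_right_cancel₀ hx
    linear_combination star w₂ x y₁ y₂
      - pr μ (fun ω => (Y₁ ω, Y₂ ω)) (y₁, y₂) * dagger w₂ x y₁
  -- (c') Y₂ ⟂ W₂ | Y₁
  have cprime : ∀ w₂ y₁ y₂,
      pr μ (fun ω => (W₂ ω, Y₁ ω, Y₂ ω)) (w₂, y₁, y₂) * pr μ Y₁ y₁
        = pr μ (fun ω => (W₂ ω, Y₁ ω)) (w₂, y₁)
          * pr μ (fun ω => (Y₁ ω, Y₂ ω)) (y₁, y₂) := by
    intro w₂ y₁ y₂
    have h1 := Finset.sum_congr rfl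
      (fun x (_ : x ∈ (Finset.univ : Finset 𝒳)) => starstar w₂ x y₁ y₂)
    simp only [← Finset.sum_mul] at h1
    rw [M9 w₂ y₁ y₂, M10 w₂ y₁] at h1
    exact h1
  -- CI entropy identity instances
  have ciA : ent μ (fun ω => (Y₁ ω, W₂ ω, X ω, Y₂ ω)) + ent μ (fun ω => (X ω, Y₂ ω))
      = ent μ (fun ω => (Y₁ ω, X ω, Y₂ ω)) + ent μ (fun ω => (W₂ ω, X ω, Y₂ ω)) := by
    apply ci_ent μ hpos Y₁ W₂ (fun ω => (X ω, Y₂ ω))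
    rintro y₁ w₂ ⟨x, y₂⟩
    have e1 : pr μ (fun ω => (Y₁ ω, W₂ ω, X ω, Y₂ ω)) (y₁, w₂, x, y₂)
        = pr μ (fun ω => (W₂ ω, X ω, Y₁ ω, Y₂ ω)) (w₂, x, y₁, y₂) :=
      (pr_comp_inj μ (fun q : 𝒲₂ × 𝒳 × 𝒴₁ × 𝒴₂ => (q.2.2.1, q.1, q.2.1, q.2.2.2))
        (by rintro ⟨a,b,c,d⟩ ⟨a',b',c',d'⟩ h; simp_all [Prod.ext_iff])
        (fun ω => (W₂ ω, X ω, Y₁ ω, Y₂ ω)) (w₂, x, y₁, y₂))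
    have e2 : pr μ (fun ω => (Y₁ ω, X ω, Y₂ ω)) (y₁, x, y₂)
        = pr μ (fun ω => (X ω, Y₁ ω, Y₂ ω)) (x, y₁, y₂) :=
      (pr_comp_inj μ (fun q : 𝒳 × 𝒴₁ × 𝒴₂ => (q.2.1, q.1, q.2.2))
        (by rintro ⟨a,b,c⟩ ⟨a',b',c'⟩ h; simp_all [Prod.ext_iff])
        (fun ω => (X ω, Y₁ ω, Y₂ ω)) (x, y₁, y₂))
    rw [e1, e2]
    exact aprime w₂ x y₁ y₂
  have ciB : ent μ (fun ω => (Y₂ ω, W₂ ω, X ω, Y₁ ω)) + ent μ (fun ω => (X ω, Y₁ ω))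
      = ent μ (fun ω => (Y₂ ω, X ω, Y₁ ω)) + ent μ (fun ω => (W₂ ω, X ω, Y₁ ω)) := by
    apply ci_ent μ hpos Y₂ W₂ (fun ω => (X ω, Y₁ ω))
    rintro y₂ w₂ ⟨x, y₁⟩
    have e1 : pr μ (fun ω => (Y₂ ω, W₂ ω, X ω, Y₁ ω)) (y₂, w₂, x, y₁)
        = pr μ (fun ω => (W₂ ω, X ω, Y₁ ω, Y₂ ω)) (w₂, x, y₁, y₂) :=
      (pr_comp_inj μ (fun q : 𝒲₂ × 𝒳 × 𝒴₁ × 𝒴₂ => (q.2.2.2, q.1, q.2.1, q.2.2.1))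
        (by rintro ⟨a,b,c,d⟩ ⟨a',b',c',d'⟩ h; simp_all [Prod.ext_iff])
        (fun ω => (W₂ ω, X ω, Y₁ ω, Y₂ ω)) (w₂, x, y₁, y₂))
    have e2 : pr μ (fun ω => (Y₂ ω, X ω, Y₁ ω)) (y₂, x, y₁)
        = pr μ (fun ω => (X ω, Y₁ ω, Y₂ ω)) (x, y₁, y₂) :=
      (pr_comp_inj μ (fun q : 𝒳 × 𝒴₁ × 𝒴₂ => (q.2.2, q.1, q.2.1))
        (by rintro ⟨a,b,c⟩ ⟨a',b',c'⟩ h; simp_all [Prod.ext_iff])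
        (fun ω => (X ω, Y₁ ω, Y₂ ω)) (x, y₁, y₂))
    rw [e1, e2]
    exact bprime w₂ x y₁ y₂
  have ciC : ent μ (fun ω => (Y₂ ω, W₂ ω, Y₁ ω)) + ent μ Y₁
      = ent μ (fun ω => (Y₂ ω, Y₁ ω)) + ent μ (fun ω => (W₂ ω, Y₁ ω)) := by
    apply ci_ent μ hpos Y₂ W₂ Y₁
    intro y₂ w₂ y₁
    have e1 : pr μ (fun ω => (Y₂ ω, W₂ ω, Y₁ ω)) (y₂, w₂, y₁)
        = pr μ (fun ω => (W₂ ω, Y₁ ω, Y₂ ω)) (w₂, y₁, y₂) :=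
      (pr_comp_inj μ (fun q : 𝒲₂ × 𝒴₁ × 𝒴₂ => (q.2.2, q.1, q.2.1))
        (by rintro ⟨a,b,c⟩ ⟨a',b',c'⟩ h; simp_all [Prod.ext_iff])
        (fun ω => (W₂ ω, Y₁ ω, Y₂ ω)) (w₂, y₁, y₂))
    have e2 : pr μ (fun ω => (Y₂ ω, Y₁ ω)) (y₂, y₁)
        = pr μ (fun ω => (Y₁ ω, Y₂ ω)) (y₁, y₂) :=
      (pr_comp_inj μ (fun q : 𝒴₁ × 𝒴₂ => (q.2, q.1))
        (by rintro ⟨a,b⟩ ⟨a',b'⟩ h; simp_all [Prod.ext_iff])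
        (fun ω => (Y₁ ω, Y₂ ω)) (y₁, y₂))
    rw [e1, e2]
    linear_combination cprime w₂ y₁ y₂
  -- Entropy permutation identities
  have EA : ent μ (fun ω => (Y₁ ω, W₂ ω, X ω, Y₂ ω))
      = ent μ (fun ω => (W₂ ω, X ω, Y₁ ω, Y₂ ω)) :=
    ent_comp_inj μ (fun q : 𝒲₂ × 𝒳 × 𝒴₁ × 𝒴₂ => (q.2.2.1, q.1, q.2.1, q.2.2.2))
      (by rintro ⟨a,b,c,d⟩ ⟨a',b',c',d'⟩ h; simp_all [Prod.ext_iff])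
      (fun ω => (W₂ ω, X ω, Y₁ ω, Y₂ ω))
  have EB : ent μ (fun ω => (Y₂ ω, W₂ ω, X ω, Y₁ ω))
      = ent μ (fun ω => (W₂ ω, X ω, Y₁ ω, Y₂ ω)) :=
    ent_comp_inj μ (fun q : 𝒲₂ × 𝒳 × 𝒴₁ × 𝒴₂ => (q.2.2.2, q.1, q.2.1, q.2.2.1))
      (by rintro ⟨a,b,c,d⟩ ⟨a',b',c',d'⟩ h; simp_all [Prod.ext_iff])
      (fun ω => (W₂ ω, X ω, Y₁ ω, Y₂ ω))
  have EA3 : ent μ (fun ω => (Y₁ ω, X ω, Y₂ ω)) = ent μ (fun ω => (X ω, Y₁ ω, Y₂ ω)) :=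
    ent_comp_inj μ (fun q : 𝒳 × 𝒴₁ × 𝒴₂ => (q.2.1, q.1, q.2.2))
      (by rintro ⟨a,b,c⟩ ⟨a',b',c'⟩ h; simp_all [Prod.ext_iff])
      (fun ω => (X ω, Y₁ ω, Y₂ ω))
  have EB3 : ent μ (fun ω => (Y₂ ω, X ω, Y₁ ω)) = ent μ (fun ω => (X ω, Y₁ ω, Y₂ ω)) :=
    ent_comp_inj μ (fun q : 𝒳 × 𝒴₁ × 𝒴₂ => (q.2.2, q.1, q.2.1))
      (by rintro ⟨a,b,c⟩ ⟨a',b',c'⟩ h; simp_all [Prod.ext_iff])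
      (fun ω => (X ω, Y₁ ω, Y₂ ω))
  have EC : ent μ (fun ω => (Y₂ ω, W₂ ω, Y₁ ω)) = ent μ (fun ω => (Y₁ ω, W₂ ω, Y₂ ω)) :=
    ent_comp_inj μ (fun q : 𝒴₁ × 𝒲₂ × 𝒴₂ => (q.2.2, q.2.1, q.1))
      (by rintro ⟨a,b,c⟩ ⟨a',b',c'⟩ h; simp_all [Prod.ext_iff])
      (fun ω => (Y₁ ω, W₂ ω, Y₂ ω))
  have ECY : ent μ (fun ω => (Y₂ ω, Y₁ ω)) = ent μ (fun ω => (Y₁ ω, Y₂ ω)) :=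
    ent_comp_inj μ (fun q : 𝒴₁ × 𝒴₂ => (q.2, q.1))
      (by rintro ⟨a,b⟩ ⟨a',b'⟩ h; simp_all [Prod.ext_iff])
      (fun ω => (Y₁ ω, Y₂ ω))
  have EWXY2 : ent μ (fun ω => (W₂ ω, X ω, Y₂ ω)) = ent μ (fun ω => (X ω, W₂ ω, Y₂ ω)) :=
    ent_comp_inj μ (fun q : 𝒳 × 𝒲₂ × 𝒴₂ => (q.2.1, q.1, q.2.2))
      (by rintro ⟨a,b,c⟩ ⟨a',b',c'⟩ h; simp_all [Prod.ext_iff])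
      (fun ω => (X ω, W₂ ω, Y₂ ω))
  have EWXY1 : ent μ (fun ω => (W₂ ω, X ω, Y₁ ω)) = ent μ (fun ω => (X ω, W₂ ω, Y₁ ω)) :=
    ent_comp_inj μ (fun q : 𝒳 × 𝒲₂ × 𝒴₁ => (q.2.1, q.1, q.2.2))
      (by rintro ⟨a,b,c⟩ ⟨a',b',c'⟩ h; simp_all [Prod.ext_iff])
      (fun ω => (X ω, W₂ ω, Y₁ ω))
  have EP1 : ent μ (fun ω => ((W₁ ω, W₂ ω), Y₁ ω)) = ent μ (fun ω => (W₁ ω, W₂ ω, Y₁ ω)) :=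
    ent_comp_inj μ (fun q : 𝒲₁ × 𝒲₂ × 𝒴₁ => ((q.1, q.2.1), q.2.2))
      (by rintro ⟨a,b,c⟩ ⟨a',b',c'⟩ h; simp_all [Prod.ext_iff])
      (fun ω => (W₁ ω, W₂ ω, Y₁ ω))
  have EP2 : ent μ (fun ω => (X ω, (W₁ ω, W₂ ω), Y₁ ω))
      = ent μ (fun ω => (X ω, W₁ ω, W₂ ω, Y₁ ω)) :=
    ent_comp_inj μ (fun q : 𝒳 × 𝒲₁ × 𝒲₂ × 𝒴₁ => (q.1, (q.2.1, q.2.2.1), q.2.2.2))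
      (by rintro ⟨a,b,c,d⟩ ⟨a',b',c',d'⟩ h; simp_all [Prod.ext_iff])
      (fun ω => (X ω, W₁ ω, W₂ ω, Y₁ ω))
  simp only [cmi]
  linarith [ciA, ciB, ciC, EA, EB, EA3, EB3, EC, ECY, EWXY2, EWXY1, EP1, EP2]

end SIScalable
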